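/- arXiv:1206.1638 — 3 statements merged into one kernel-verified Lean document; each statement's English description precedes it below -/
import Mathlib

section
/- Let b be a nonzero complex number and y = b + b⁻¹. Then for n ≥ 1, a complex number x satisfies Tₙ(x) = y if and only if x = a + a⁻¹ for some complex number a with aⁿ = b. -/
/-- Normalized Chebyshev polynomial of the first kind: `T 0 = 2`, `T 1 = X`. -/
noncomputable def chebT (R : Type*) [CommRing R] : ℕ → Polynomial R
  | 0 => 2
  | 1 => Polynomial.X
  | n + 2 => Polynomial.X * chebT R (n + 1) - chebT R n

lemma chebT_eval_add_inv (a : ℂ) (ha : a ≠ 0) :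
    ∀ n : ℕ, (chebT ℂ n).eval (a + a⁻¹) = a ^ n + (a⁻¹) ^ n := by
  intro n
  induction n using Nat.strong_induction_on with
  | _ n ih =>
    match n with
    | 0 => norm_num [chebT]
    | 1 => simp [chebT]
    | (m + 2) =>
      have h1 := ih (m + 1) (by omega)
      have h0 := ih m (by omega)
      simp only [chebT, Polynomial.eval_sub, Polynomial.eval_mul, Polynomial.eval_X, h1, h0]
      have hinv : a * a⁻¹ = 1 := mul_inv_cancel₀ ha
      linear_combination (a⁻¹ ^ m + a ^ m) * hinv

lemma exists_add_inv (x : ℂ) : ∃ a : ℂ, a ≠ 0 ∧ x = a + a⁻¹ := by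
  obtain ⟨s, hs⟩ : ∃ s : ℂ, s ^ 2 = x ^ 2 - 4 :=
    IsAlgClosed.exists_pow_nat_eq (x ^ 2 - 4) (n := 2) (by norm_num)
  have hmul : (x + s) / 2 * ((x - s) / 2) = 1 := by
    linear_combination (-(1 : ℂ)/4) * hs
  have hne : (x + s) / 2 ≠ 0 := left_ne_zero_of_mul_eq_one hmul
  have hinv : ((x + s) / 2)⁻¹ = (x - s) / 2 := inv_eq_of_mul_eq_one_right hmul
  exact ⟨(x + s) / 2, hne, by rw [hinv]; ring⟩

/-- For `b ≠ 0`, `y = b + b⁻¹` and `n ≥ 1`, the solutions of `Tₙ(x) = y` are exactly the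
numbers `x = a + a⁻¹` where `a` ranges over the `n`-th roots of `b`. -/
theorem chebT_eval_eq_iff (b y : ℂ) (hb : b ≠ 0) (hy : y = b + b⁻¹) (n : ℕ) (hn : 1 ≤ n)
    (x : ℂ) :
    (chebT ℂ n).eval x = y ↔ ∃ a : ℂ, a ^ n = b ∧ x = a + a⁻¹ := by
  constructor
  · rintro hx
    obtain ⟨a, ha, rfl⟩ := exists_add_inv x
    rw [chebT_eval_add_inv a ha n, hy] at hx
    have han : a ^ n ≠ 0 := pow_ne_zero _ ha
    have key : (a ^ n - b) * (a ^ n - b⁻¹) = 0 := by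
      have h1 : (a⁻¹) ^ n = (a ^ n)⁻¹ := by rw [inv_pow]
      have h2 : a ^ n * (a⁻¹) ^ n = 1 := by rw [h1]; exact mul_inv_cancel₀ han
      have h3 : b * b⁻¹ = 1 := mul_inv_cancel₀ hb
      linear_combination a ^ n * hx + h3 - h2
    rcases mul_eq_zero.mp key with h | h
    · exact ⟨a, by linear_combination h, rfl⟩
    · refine ⟨a⁻¹, ?_, by rw [inv_inv, add_comm]⟩
      rw [inv_pow]
      have : a ^ n = b⁻¹ := by linear_combination h
      rw [this, inv_inv]
  · rintro ⟨a, han, rfl⟩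
    have ha : a ≠ 0 := by
      intro h; apply hb; rw [← han, h, zero_pow (by omega)]
    rw [chebT_eval_add_inv a ha n, hy, inv_pow, han]
end

section
/- Let ω be an invertible element of ℂ, let σ be a skew-symmetric integer matrix, and let 𝒯^ω be the algebra generated by invertible Z₁,…,Zₙ with relations Z_iZ_j = ω^{2σ_{ij}} Z_jZ_i. If ι = ω^{N²}, then the assignment Z_i ↦ Z_i^N extends to an algebra homomorphism F : 𝒯^ι → 𝒯^ω. -/
lemma qcomm_pow {A : Type} [Ring A] [Algebra ℂ A] (a b : A) (q : ℂ)
    (h : a * b = q • (b * a)) :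
    ∀ k m : ℕ, a ^ k * b ^ m = q ^ (k * m) • (b ^ m * a ^ k) := by
  have step1 : ∀ m : ℕ, a * b ^ m = q ^ m • (b ^ m * a) := by
    intro m
    induction m with
    | zero => simp
    | succ m ih =>
      calc a * b ^ (m + 1) = (a * b ^ m) * b := by rw [pow_succ, mul_assoc]
        _ = q ^ m • (b ^ m * (a * b)) := by rw [ih, smul_mul_assoc, mul_assoc]
        _ = q ^ m • (b ^ m * (q • (b * a))) := by rw [h]
        _ = q ^ (m + 1) • (b ^ (m + 1) * a) := by
            rw [mul_smul_comm, smul_smul, pow_succ, pow_succ]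
            ring_nf
            rw [mul_assoc]
  intro k
  induction k with
  | zero => simp
  | succ k ih =>
    intro m
    calc a ^ (k + 1) * b ^ m = a * (a ^ k * b ^ m) := by
          rw [pow_succ', mul_assoc]
      _ = q ^ (k * m) • (a * (b ^ m * a ^ k)) := by rw [ih m, mul_smul_comm]
      _ = q ^ (k * m) • ((q ^ m • (b ^ m * a)) * a ^ k) := by
          rw [← mul_assoc, step1 m]
      _ = q ^ ((k + 1) * m) • (b ^ m * a ^ (k + 1)) := by
          rw [smul_mul_assoc, smul_smul, ← pow_add, mul_assoc, ← pow_succ']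
          ring_nf

/-- Frobenius homomorphism for quantum tori.  Let `𝒯^ω` be a quantum torus over `ℂ` with
invertible generators `Z i` satisfying `Z i * Z j = ω^(2σᵢⱼ) Z j * Z i` for a skew-symmetric
integer matrix `σ`, and let `𝒯^ι` be the analogous algebra for `ι = ω^(N²)`, with generators
`W i`; the latter is encoded by its universal property.  Then `Z i ↦ (Z i)^N` extends to an
algebra homomorphism `F : 𝒯^ι → 𝒯^ω`. -/
theorem quantum_torus_frobenius (n N : ℕ) (ω : ℂˣ) (σ : Fin n → Fin n → ℤ)
    (hσ : ∀ i j, σ i j = -σ j i)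
    (Aω Aι : Type) [Ring Aω] [Algebra ℂ Aω] [Ring Aι] [Algebra ℂ Aι]
    (Z : Fin n → Aωˣ) (W : Fin n → Aιˣ)
    (hZ : ∀ i j, (Z i : Aω) * (Z j : Aω) =
      ((ω ^ (2 * σ i j) : ℂˣ) : ℂ) • ((Z j : Aω) * (Z i : Aω)))
    (hW : ∀ (B : Type) [Ring B] [Algebra ℂ B] (u : Fin n → Bˣ),
      (∀ i j, (u i : B) * (u j : B) =
        (((ω ^ (N ^ 2) : ℂˣ) ^ (2 * σ i j) : ℂˣ) : ℂ) • ((u j : B) * (u i : B))) →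
      ∃! f : Aι →ₐ[ℂ] B, ∀ i, f (W i) = u i) :
    ∃ F : Aι →ₐ[ℂ] Aω, ∀ i, F (W i) = (Z i : Aω) ^ N := by
  have key : ∀ i j, ((Z i ^ N : Aωˣ) : Aω) * ((Z j ^ N : Aωˣ) : Aω) =
      (((ω ^ (N ^ 2) : ℂˣ) ^ (2 * σ i j) : ℂˣ) : ℂ) •
        (((Z j ^ N : Aωˣ) : Aω) * ((Z i ^ N : Aωˣ) : Aω)) := by
    intro i j
    have hq : (((ω ^ (N ^ 2) : ℂˣ) ^ (2 * σ i j) : ℂˣ) : ℂ) =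
        ((ω ^ (2 * σ i j) : ℂˣ) : ℂ) ^ (N * N) := by
      rw [← Units.val_pow_eq_pow_val, ← zpow_natCast (ω ^ (2 * σ i j)) (N * N),
        ← zpow_mul, ← zpow_natCast ω (N ^ 2), ← zpow_mul]
      ring_nf
    simp only [Units.val_pow_eq_pow_val, hq]
    exact qcomm_pow _ _ _ (hZ i j) N N
  obtain ⟨f, hf, -⟩ := hW Aω (fun i => Z i ^ N) key
  exact ⟨f, fun i => by rw [hf i, Units.val_pow_eq_pow_val]⟩
end

section
/- Suppose A⁴ is a primitive N-th root of unity in ℂ and n is an integer with −N < n < N and n ≡ N (mod 2). Then A^{N(N+n)}·[ (N−n)/2 ]_{A⁴}! / [ (N+n)/2 ]_{A⁴}! = −A^{2N−4} · A^{(N−2)(N−2+n)}·[ (N−2−n)/2 ]_{A⁴}! / [ (N−2+n)/2 ]_{A⁴}!, i.e., the ratio of the two left-right pattern coefficients b and b′ equals −A^{2N−4}. -/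
/-- The quantum integer `[k]_a = 1 + a + ⋯ + a^(k-1)` in `ℂ`. -/
noncomputable def qInt (a : ℂ) (k : ℕ) : ℂ := ∑ i ∈ Finset.range k, a ^ i

/-- The quantum factorial `[k]_a! = [k]_a [k-1]_a ⋯ [1]_a`. -/
noncomputable def qFact (a : ℂ) (k : ℕ) : ℂ := ∏ i ∈ Finset.range k, qInt a (i + 1)

lemma qInt_mul_sub_one (a : ℂ) (k : ℕ) : qInt a k * (a - 1) = a ^ k - 1 :=
  geom_sum_mul a k

lemma qInt_ne_zero {N : ℕ} {a : ℂ} (h : IsPrimitiveRoot a N) {k : ℕ}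
    (hk1 : 0 < k) (hk : k < N) : qInt a k ≠ 0 := by
  have hN : 1 < N := lt_of_le_of_lt hk1 hk
  have hk1' : a ^ k ≠ 1 := h.pow_ne_one_of_pos_of_lt hk1.ne' hk
  intro hz
  have h2 := qInt_mul_sub_one a k
  rw [hz, zero_mul] at h2
  exact hk1' (by linear_combination -h2)

lemma qFact_ne_zero {N : ℕ} {a : ℂ} (h : IsPrimitiveRoot a N) {k : ℕ}
    (hk : k < N) : qFact a k ≠ 0 := by
  rw [qFact]
  apply Finset.prod_ne_zero_iff.mpr
  intro i hi
  exact qInt_ne_zero h (Nat.succ_pos i) (by have := Finset.mem_range.mp hi; omega)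

lemma qFact_succ (a : ℂ) (k : ℕ) : qFact a (k + 1) = qFact a k * qInt a (k + 1) :=
  Finset.prod_range_succ _ _

lemma qInt_key {N : ℕ} {a : ℂ} (h : IsPrimitiveRoot a N) (hN : 1 < N) {p q : ℕ}
    (hpq : p + q = N) : a ^ p * qInt a q = - qInt a p := by
  have ha1 : a - 1 ≠ 0 := sub_ne_zero_of_ne (h.ne_one hN)
  apply mul_right_cancel₀ ha1
  have h1 := qInt_mul_sub_one a q
  have h2 := qInt_mul_sub_one a p
  have hpow : a ^ p * a ^ q = 1 := by rw [← pow_add, hpq, h.pow_eq_one]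
  linear_combination a ^ p * h1 + h2 + hpow

/-- If `A⁴` is a primitive `N`-th root of unity and `−N < n < N` with `n ≡ N (mod 2)`, then
`A^{N(N+n)}·[(N−n)/2]! / [(N+n)/2]! = −A^{2N−4} · A^{(N−2)(N−2+n)}·[(N−2−n)/2]! / [(N−2+n)/2]!`
(quantum factorials with parameter `A⁴`), i.e. `b_i = −A^{2N−4} b_i'`. -/
theorem left_right_coefficient_ratio (N : ℕ) (A : ℂ) (hA : A ≠ 0)
    (hprim : IsPrimitiveRoot (A ^ 4) N) (n : ℤ) (h1 : -(N : ℤ) < n) (h2 : n < N)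
    (hpar : ((N : ℤ) - n) % 2 = 0) :
    A ^ ((N : ℤ) * ((N : ℤ) + n)) *
        qFact (A ^ 4) (((N : ℤ) - n) / 2).toNat / qFact (A ^ 4) (((N : ℤ) + n) / 2).toNat =
      -A ^ (2 * (N : ℤ) - 4) *
        (A ^ (((N : ℤ) - 2) * ((N : ℤ) - 2 + n)) *
          qFact (A ^ 4) (((N : ℤ) - 2 - n) / 2).toNat /
          qFact (A ^ 4) (((N : ℤ) - 2 + n) / 2).toNat) := by
  have hN2 : 2 ≤ N := by omega
  set p := (((N : ℤ) - n) / 2).toNat with hp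
  set q := (((N : ℤ) + n) / 2).toNat with hq
  have hp2 : 2 * (p : ℤ) = (N : ℤ) - n := by omega
  have hq2 : 2 * (q : ℤ) = (N : ℤ) + n := by omega
  have hpq : p + q = N := by omega
  have hp1 : 0 < p := by omega
  have hq1 : 0 < q := by omega
  have hqN : q < N := by omega
  have e3 : (((N : ℤ) - 2 - n) / 2).toNat = p - 1 := by omega
  have e4 : (((N : ℤ) - 2 + n) / 2).toNat = q - 1 := by omega
  rw [e3, e4]
  obtain ⟨P, hP⟩ : ∃ P, p = P + 1 := ⟨p - 1, by omega⟩
  obtain ⟨Q, hQ⟩ : ∃ Q, q = Q + 1 := ⟨q - 1, by omega⟩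
  have eP : p - 1 = P := by omega
  have eQ : q - 1 = Q := by omega
  rw [eP, eQ, hP, hQ, qFact_succ, qFact_succ]
  have hkey : (A ^ 4) ^ (P + 1) * qInt (A ^ 4) (Q + 1) = - qInt (A ^ 4) (P + 1) :=
    qInt_key hprim (by omega) (by omega)
  have hqne : qInt (A ^ 4) (Q + 1) ≠ 0 := qInt_ne_zero hprim (Nat.succ_pos Q) (by omega)
  have hFQ : qFact (A ^ 4) Q ≠ 0 := qFact_ne_zero hprim (by omega)
  -- scalar identity
  have h4N : A ^ ((4 * N : ℕ) : ℤ) = 1 := by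
    rw [zpow_natCast, pow_mul]; exact hprim.pow_eq_one
  have hb : (A ^ 4) ^ (P + 1) = A ^ ((4 * (P + 1) : ℕ) : ℤ) := by
    rw [zpow_natCast, pow_mul]
  have hexp : (N : ℤ) * ((N : ℤ) + n) + ((4 * (P + 1) : ℕ) : ℤ) =
      (2 * (N : ℤ) - 4) + ((N : ℤ) - 2) * ((N : ℤ) - 2 + n) + ((4 * N : ℕ) : ℤ) := by
    push_cast
    have hPp : (P : ℤ) + 1 = (p : ℤ) := by omega
    linear_combination 2 * hp2 + (4 : ℤ) * hPp
  have hs : A ^ ((N : ℤ) * ((N : ℤ) + n)) * (A ^ 4) ^ (P + 1) =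
      A ^ (2 * (N : ℤ) - 4) * A ^ (((N : ℤ) - 2) * ((N : ℤ) - 2 + n)) := by
    rw [hb, ← zpow_add₀ hA, hexp, zpow_add₀ hA, zpow_add₀ hA, h4N, mul_one]
  have hsub : qInt (A ^ 4) (P + 1) = -((A ^ 4) ^ (P + 1) * qInt (A ^ 4) (Q + 1)) := by
    linear_combination hkey
  rw [hsub]
  field_simp
  linear_combination (-qFact (A ^ 4) P) * hs
end
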